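/- Let G be a group, u : G → ℝ a nonzero homomorphism, and Z[G]_u the associated Novikov ring. If a ∈ Z[G]_u has support contained in {g : u(g) > 0}, then 1 + a is a unit in Z[G]_u, with inverse Σ_{n≥0} (−a)^n. -/

import Mathlib

open scoped Classical

/-- The Novikov condition defining `ℤ[G]_u`. -/
def NovCond {G : Type*} [Group G] (u : G → ℝ) (f : G → ℤ) : Prop :=
  ∀ C : ℝ, {g : G | f g ≠ 0 ∧ u g ≤ C}.Finite

/-- Convolution product of formal series on `G`. -/
noncomputable def conv {G : Type*} [Group G] (f g : G → ℤ) : G → ℤ :=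
  fun k => ∑ᶠ p : G × G, if p.1 * p.2 = k then f p.1 * g p.2 else 0

/-- The series `1`. -/
noncomputable def oneF {G : Type*} [Group G] : G → ℤ :=
  fun g => if g = 1 then 1 else 0

/-- Convolution powers of a series. -/
noncomputable def convPow {G : Type*} [Group G] (f : G → ℤ) : ℕ → (G → ℤ)
  | 0 => oneF
  | n + 1 => conv (convPow f n) f

section Aux
variable {G : Type*} [Group G]

lemma conv_apply (f g : G → ℤ) (k : G) :
    conv f g k = ∑ᶠ x : G, f x * g (x⁻¹ * k) := by
  classical
  set F : G × G → ℤ := fun p => if p.1 * p.2 = k then f p.1 * g p.2 else 0 with hF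
  have hinj : Function.Injective (fun x : G => (x, x⁻¹ * k)) := fun x y h =>
    congrArg Prod.fst h
  have hsub : Function.support F ⊆ Set.range (fun x : G => (x, x⁻¹ * k)) := by
    rintro ⟨p1, p2⟩ hp
    simp only [Function.mem_support, hF] at hp
    by_cases h : p1 * p2 = k
    · exact ⟨p1, by simp [← h]⟩
    · simp [h] at hp
  calc conv f g k = ∑ᶠ p ∈ Set.univ, F p := (finsum_mem_univ F).symm
    _ = ∑ᶠ p ∈ Set.range (fun x : G => (x, x⁻¹ * k)), F p := by
        apply finsum_mem_inter_support_eq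
        rw [Set.univ_inter, Set.inter_eq_right.2 hsub]
    _ = ∑ᶠ x, F (x, x⁻¹ * k) := finsum_mem_range hinj
    _ = ∑ᶠ x, f x * g (x⁻¹ * k) := by
        apply finsum_congr; intro x; simp [hF, mul_inv_cancel_left]

lemma conv_eq_sum (f g : G → ℤ) (k : G) (s : Finset G)
    (hs : ∀ x, f x ≠ 0 → g (x⁻¹ * k) ≠ 0 → x ∈ s) :
    conv f g k = ∑ x ∈ s, f x * g (x⁻¹ * k) := by
  rw [conv_apply]
  apply finsum_eq_sum_of_support_subset
  intro x hx
  simp only [Function.mem_support] at hx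
  exact hs x (left_ne_zero_of_mul hx) (right_ne_zero_of_mul hx)

lemma conv_ne_zero {f g : G → ℤ} {k : G} (h : conv f g k ≠ 0) :
    ∃ x, f x ≠ 0 ∧ g (x⁻¹ * k) ≠ 0 := by
  rw [conv_apply] at h
  by_contra hc
  push_neg at hc
  refine h (finsum_eq_zero_of_forall_eq_zero fun x => ?_)
  by_cases h1 : f x = 0
  · simp [h1]
  · simp [hc x h1]

lemma conv_oneF_left (f : G → ℤ) : conv oneF f = f := by
  funext k
  rw [conv_apply]
  rw [finsum_eq_single _ (1 : G) (fun x hx => by simp [oneF, hx])]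
  simp [oneF]

lemma conv_oneF_right (f : G → ℤ) : conv f oneF = f := by
  funext k
  rw [conv_apply]
  rw [finsum_eq_single _ k (fun x hx => by
    have h1 : x⁻¹ * k ≠ 1 := fun h => hx (by
      have := congrArg (x * ·) h
      simpa [mul_inv_cancel_left] using this.symm)
    simp [oneF, h1])]
  simp [oneF]

end Aux


section Aux2
variable {G : Type*} [Group G] {u : G → ℝ}

/-- Series with Novikov condition and support in `u ≥ 0`. -/
def Good (u : G → ℝ) (f : G → ℤ) : Prop :=
  NovCond u f ∧ ∀ g, f g ≠ 0 → 0 ≤ u g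

variable (hu : ∀ a b : G, u (a * b) = u a + u b)
include hu

lemma u_one : u 1 = 0 := by
  have := hu 1 1
  simp at this
  linarith

lemma u_inv (x : G) : u x⁻¹ = -u x := by
  have h := hu x x⁻¹
  simp [u_one hu] at h
  linarith

lemma u_invmul (x k : G) : u (x⁻¹ * k) = u k - u x := by
  rw [hu, u_inv hu]; ring

lemma good_oneF : Good u (oneF : G → ℤ) := by
  constructor
  · intro C
    apply Set.Finite.subset (Set.finite_singleton (1 : G))
    rintro g ⟨hg, -⟩
    simp only [Set.mem_singleton_iff]
    by_contra h
    simp [oneF, h] at hg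
  · intro g hg
    by_cases h : g = 1
    · simp [h, u_one hu]
    · simp [oneF, h] at hg

lemma good_conv {f g : G → ℤ} (hf : Good u f) (hg : Good u g) : Good u (conv f g) := by
  constructor
  · intro C
    have : {k : G | conv f g k ≠ 0 ∧ u k ≤ C} ⊆
        (fun p : G × G => p.1 * p.2) ''
          ({x | f x ≠ 0 ∧ u x ≤ C} ×ˢ {y | g y ≠ 0 ∧ u y ≤ C}) := by
      rintro k ⟨hk, hkC⟩
      obtain ⟨x, hx, hx2⟩ := conv_ne_zero hk
      have h1 : 0 ≤ u x := hf.2 x hx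
      have h2 : 0 ≤ u (x⁻¹ * k) := hg.2 _ hx2
      rw [u_invmul hu] at h2
      exact ⟨(x, x⁻¹ * k), ⟨⟨hx, by linarith⟩, ⟨hx2, by rw [u_invmul hu]; linarith⟩⟩,
        by simp [mul_inv_cancel_left]⟩
    exact Set.Finite.subset (Set.Finite.image _ (Set.Finite.prod (hf.1 C) (hg.1 C))) this
  · intro k hk
    obtain ⟨x, hx, hx2⟩ := conv_ne_zero hk
    have h1 : 0 ≤ u x := hf.2 x hx
    have h2 : 0 ≤ u (x⁻¹ * k) := hg.2 _ hx2
    rw [u_invmul hu] at h2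
    linarith

variable {a : G → ℤ} (ha : NovCond u a) (hsupp : ∀ g : G, a g ≠ 0 → 0 < u g)
include ha hsupp

omit hu in
lemma good_a : Good u a := ⟨ha, fun g hg => (hsupp g hg).le⟩

lemma good_convPow : ∀ n, Good u (convPow a n)
  | 0 => good_oneF hu
  | n + 1 => good_conv hu (good_convPow n) (good_a (u := u) ha hsupp)

omit hu ha hsupp in
lemma convPow_list {n : ℕ} {k : G} (h : convPow a n k ≠ 0) :
    ∃ l : List G, l.length = n ∧ (∀ g ∈ l, a g ≠ 0) ∧ l.prod = k := by
  induction n generalizing k with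
  | zero =>
    refine ⟨[], rfl, by simp, ?_⟩
    simp only [convPow, oneF] at h
    by_contra hk
    by_cases h1 : k = 1
    · exact hk (by simp [h1])
    · simp [h1] at h
  | succ n ih =>
    obtain ⟨x, hx, hx2⟩ := conv_ne_zero h
    obtain ⟨l, hl1, hl2, hl3⟩ := ih hx
    refine ⟨l ++ [x⁻¹ * k], by simp [hl1], ?_, by simp [hl3, mul_inv_cancel_left]⟩
    intro g hg
    rcases List.mem_append.1 hg with h' | h'
    · exact hl2 g h'
    · simp at h'; subst h'; exact hx2

omit ha hsupp in
lemma u_listProd (l : List G) : u l.prod = (l.map u).sum := by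
  induction l with
  | nil => simpa using u_one hu
  | cons x t ih => simp [hu, ih]

end Aux2
section Aux3
variable {G : Type*} [Group G] {u : G → ℝ}
variable (hu : ∀ a b : G, u (a * b) = u a + u b)
variable {a : G → ℤ} (ha : NovCond u a) (hsupp : ∀ g : G, a g ≠ 0 → 0 < u g)

omit hu ha hsupp in
lemma length_mul_le_sum : ∀ {l : List ℝ} {ε : ℝ}, (∀ x ∈ l, ε ≤ x) → (l.length : ℝ) * ε ≤ l.sum := by
  intro l
  induction l with
  | nil => simp
  | cons x t ih =>
    intro ε h
    have h1 : ε ≤ x := h x (by simp)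
    have h2 : (t.length : ℝ) * ε ≤ t.sum := ih (fun y hy => h y (by simp [hy]))
    simp only [List.length_cons, List.sum_cons, Nat.cast_add, Nat.cast_one]
    nlinarith

include hu hsupp in
omit ha in
lemma list_elt_le {l : List G} (hl : ∀ g ∈ l, a g ≠ 0) {g : G} (hg : g ∈ l) :
    u g ≤ u l.prod := by
  rw [u_listProd hu]
  refine List.single_le_sum ?_ _ (List.mem_map_of_mem (f := u) hg)
  intro x hx
  obtain ⟨y, hy, rfl⟩ := List.mem_map.1 hx
  exact (hsupp y (hl y hy)).le

include hu ha hsupp in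
lemma key1 (k : G) : {n : ℕ | convPow a n k ≠ 0}.Finite := by
  by_cases hex : ∃ n, n ≠ 0 ∧ convPow a n k ≠ 0
  · obtain ⟨n0, hn0, hk0⟩ := hex
    set S := (ha (u k)).toFinset with hS
    have hSmem : ∀ {l : List G}, (∀ g ∈ l, a g ≠ 0) → l.prod = k → ∀ g ∈ l, g ∈ S := by
      intro l h1 h2 g hg
      refine (Set.Finite.mem_toFinset _).2 ⟨h1 g hg, ?_⟩
      rw [← h2]
      exact list_elt_le hu hsupp h1 hg
    have hSne : S.Nonempty := by
      obtain ⟨l, hl1, hl2, hl3⟩ := convPow_list (a := a) hk0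
      rcases l with - | ⟨x, t⟩
      · exact absurd hl1.symm hn0
      · exact ⟨x, hSmem hl2 hl3 x (by simp)⟩
    set ε := S.inf' hSne u with hε
    obtain ⟨y, hy, hyeq⟩ := Finset.exists_mem_eq_inf' hSne u
    have hεpos : 0 < ε := by
      rw [hε, hyeq]
      exact hsupp y ((Set.Finite.mem_toFinset _).1 hy).1
    apply Set.Finite.subset (Set.finite_Iic ⌈u k / ε⌉₊)
    intro n hn
    simp only [Set.mem_setOf_eq] at hn
    obtain ⟨l, hl1, hl2, hl3⟩ := convPow_list (a := a) hn
    have hbound : (n : ℝ) * ε ≤ u k := by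
      have h1 : ∀ x ∈ l.map u, ε ≤ x := by
        intro x hx
        obtain ⟨g, hg, rfl⟩ := List.mem_map.1 hx
        exact Finset.inf'_le u (hSmem hl2 hl3 g hg)
      have h2 := length_mul_le_sum h1
      rw [List.length_map, hl1, ← u_listProd hu, hl3] at h2
      exact h2
    have : (n : ℝ) ≤ u k / ε := by
      rw [le_div_iff₀ hεpos]; exact hbound
    exact Set.mem_Iic.2 (Nat.cast_le.mp (this.trans (Nat.le_ceil _)) : n ≤ ⌈u k / ε⌉₊)
  · push_neg at hex
    apply Set.Finite.subset (Set.finite_singleton 0)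
    intro n hn
    simp only [Set.mem_setOf_eq] at hn
    by_contra h
    exact hn (hex n h)

include hu ha hsupp in
lemma key2 (C : ℝ) : {x : G | (∃ n, convPow a n x ≠ 0) ∧ u x ≤ C}.Finite := by
  set S := (ha C).toFinset with hS
  have hSmem : ∀ {l : List G}, (∀ g ∈ l, a g ≠ 0) → u l.prod ≤ C → ∀ g ∈ l, g ∈ S := by
    intro l h1 h2 g hg
    exact (Set.Finite.mem_toFinset _).2 ⟨h1 g hg, (list_elt_le hu hsupp h1 hg).trans h2⟩
  by_cases hSne : S.Nonempty
  · set ε := S.inf' hSne u with hε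
    obtain ⟨y, hy, hyeq⟩ := Finset.exists_mem_eq_inf' hSne u
    have hεpos : 0 < ε := by
      rw [hε, hyeq]
      exact hsupp y ((Set.Finite.mem_toFinset _).1 hy).1
    set N := ⌈C / ε⌉₊ with hN
    set M : ℕ → Finset G := fun n =>
      Nat.rec {1} (fun _ Mn => (S ×ˢ Mn).image fun p => p.1 * p.2) n with hM
    have hMl : ∀ l : List G, (∀ g ∈ l, g ∈ S) → l.prod ∈ M l.length := by
      intro l
      induction l with
      | nil => simp [hM]
      | cons x t ih =>
        intro h
        have h1 : t.prod ∈ M t.length := ih (fun g hg => h g (by simp [hg]))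
        have h2 : x ∈ S := h x (by simp)
        simp only [List.prod_cons, List.length_cons, hM]
        exact Finset.mem_image.2 ⟨(x, t.prod), Finset.mem_product.2 ⟨h2, h1⟩, rfl⟩
    apply Set.Finite.subset (((Finset.range (N + 1)).biUnion M) : Finset G).finite_toSet
    rintro k ⟨⟨n, hn⟩, hC⟩
    obtain ⟨l, hl1, hl2, hl3⟩ := convPow_list (a := a) hn
    have helS : ∀ g ∈ l, g ∈ S := hSmem hl2 (by rw [hl3]; exact hC)
    have hnN : n ≤ N := by
      have h1 : ∀ x ∈ l.map u, ε ≤ x := by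
        intro x hx
        obtain ⟨g, hg, rfl⟩ := List.mem_map.1 hx
        exact Finset.inf'_le u (helS g hg)
      have h2 := length_mul_le_sum h1
      rw [List.length_map, hl1, ← u_listProd hu, hl3] at h2
      have h3 : (n : ℝ) ≤ C / ε := by
        rw [le_div_iff₀ hεpos]; linarith
      exact Nat.cast_le.mp (h3.trans (Nat.le_ceil _))
    refine Finset.mem_coe.2 (Finset.mem_biUnion.2 ⟨n, Finset.mem_range.2 (by omega), ?_⟩)
    rw [← hl3, ← hl1]
    exact hMl l helS
  · apply Set.Finite.subset (Set.finite_singleton 1)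
    rintro k ⟨⟨n, hn⟩, hC⟩
    obtain ⟨l, hl1, hl2, hl3⟩ := convPow_list (a := a) hn
    rcases l with - | ⟨x, t⟩
    · simp at hl3; simp [← hl3]
    · exact absurd ⟨x, hSmem hl2 (by rw [hl3]; exact hC) x (by simp)⟩ hSne

end Aux3
section Aux4
variable {G : Type*} [Group G] {u : G → ℝ}
variable (hu : ∀ a b : G, u (a * b) = u a + u b)

lemma sum_eq_sum_support {α : Type*} [DecidableEq α] {A B : Finset α} {F : α → ℤ}
    (hA : ∀ z ∈ A, z ∉ B → F z = 0) (hB : ∀ z ∈ B, z ∉ A → F z = 0) :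
    ∑ z ∈ A, F z = ∑ z ∈ B, F z := by
  have h1 : ∑ z ∈ A, F z = ∑ z ∈ A ∪ B, F z := by
    apply Finset.sum_subset Finset.subset_union_left
    intro x hx hxA
    rcases Finset.mem_union.1 hx with h | h
    · exact absurd h hxA
    · exact hB x h hxA
  have h2 : ∑ z ∈ B, F z = ∑ z ∈ A ∪ B, F z := by
    apply Finset.sum_subset Finset.subset_union_right
    intro x hx hxB
    rcases Finset.mem_union.1 hx with h | h
    · exact hA x h hxB
    · exact absurd h hxB
  rw [h1, h2]

include hu in
lemma conv_assoc {f g h : G → ℤ} (hf : Good u f) (hg : Good u g) (hh : Good u h) :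
    conv (conv f g) h = conv f (conv g h) := by
  funext k
  set C := u k with hC
  set Sf := (hf.1 C).toFinset with hSf
  set Sg := (hg.1 C).toFinset with hSg
  have hmemf : ∀ {x}, x ∈ Sf ↔ (f x ≠ 0 ∧ u x ≤ C) := fun {x} => Set.Finite.mem_toFinset _
  have hmemg : ∀ {y}, y ∈ Sg ↔ (g y ≠ 0 ∧ u y ≤ C) := fun {y} => Set.Finite.mem_toFinset _
  set T := ((Sf ×ˢ Sg).image fun p : G × G => p.1 * p.2).filter (fun z => u z ≤ C) with hT
  have hTmem : ∀ {z}, conv f g z ≠ 0 → u z ≤ C → z ∈ T := by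
    intro z hz1 huz
    obtain ⟨x, hx1, hx2⟩ := conv_ne_zero hz1
    have h1 : 0 ≤ u x := hf.2 _ hx1
    have h2 : 0 ≤ u (x⁻¹ * z) := hg.2 _ hx2
    rw [u_invmul hu] at h2
    refine Finset.mem_filter.2 ⟨Finset.mem_image.2 ⟨(x, x⁻¹ * z),
      Finset.mem_product.2 ⟨?_, ?_⟩, by simp [mul_inv_cancel_left]⟩, huz⟩
    · exact hmemf.2 ⟨hx1, by linarith⟩
    · exact hmemg.2 ⟨hx2, by rw [u_invmul hu]; linarith⟩
  have hL : conv (conv f g) h k = ∑ z ∈ T, conv f g z * h (z⁻¹ * k) := by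
    apply conv_eq_sum
    intro z hz1 hz2
    have huz : u z ≤ C := by
      have := hh.2 _ hz2; rw [u_invmul hu] at this; linarith
    exact hTmem hz1 huz
  have hfg : ∀ z, u z ≤ C → conv f g z = ∑ x ∈ Sf, f x * g (x⁻¹ * z) := by
    intro z hz
    apply conv_eq_sum
    intro x hx1 hx2
    have h2 : 0 ≤ u (x⁻¹ * z) := hg.2 _ hx2
    rw [u_invmul hu] at h2
    exact hmemf.2 ⟨hx1, by linarith⟩
  have hR : conv f (conv g h) k = ∑ x ∈ Sf, f x * conv g h (x⁻¹ * k) := by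
    apply conv_eq_sum
    intro x hx1 hx2
    have h2 := (good_conv hu hg hh).2 _ hx2
    rw [u_invmul hu] at h2
    exact hmemf.2 ⟨hx1, by linarith⟩
  have hgh : ∀ x ∈ Sf, conv g h (x⁻¹ * k) = ∑ y ∈ Sg, g y * h (y⁻¹ * (x⁻¹ * k)) := by
    intro x hx
    obtain ⟨hx1, hx2⟩ := hmemf.1 hx
    have hx0 : 0 ≤ u x := hf.2 _ hx1
    apply conv_eq_sum
    intro y hy1 hy2
    have h2 : 0 ≤ u (y⁻¹ * (x⁻¹ * k)) := hh.2 _ hy2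
    rw [u_invmul hu, u_invmul hu] at h2
    exact hmemg.2 ⟨hy1, by linarith⟩
  have e1 : ∑ z ∈ T, conv f g z * h (z⁻¹ * k)
      = ∑ x ∈ Sf, ∑ z ∈ T, f x * g (x⁻¹ * z) * h (z⁻¹ * k) := by
    rw [← Finset.sum_comm]
    apply Finset.sum_congr rfl
    intro z hz
    rw [hfg z ((Finset.mem_filter.1 hz).2), Finset.sum_mul]
  have e2 : ∑ x ∈ Sf, f x * conv g h (x⁻¹ * k)
      = ∑ x ∈ Sf, ∑ y ∈ Sg, f x * (g y * h (y⁻¹ * (x⁻¹ * k))) := by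
    apply Finset.sum_congr rfl
    intro x hx
    rw [hgh x hx, Finset.mul_sum]
  rw [hL, hR, e1, e2]
  apply Finset.sum_congr rfl
  intro x hx
  obtain ⟨hx1, hx2⟩ := hmemf.1 hx
  have hx0 : 0 ≤ u x := hf.2 _ hx1
  set t : G → ℤ := fun z => f x * g (x⁻¹ * z) * h (z⁻¹ * k) with ht
  have hre : ∀ y, f x * (g y * h (y⁻¹ * (x⁻¹ * k))) = t (x * y) := by
    intro y
    simp only [ht, inv_mul_cancel_left, mul_inv_rev, mul_assoc]
  rw [Finset.sum_congr rfl (fun y _ => hre y)]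
  have e3 : ∑ y ∈ Sg, t (x * y) = ∑ z ∈ Sg.map (mulLeftEmbedding x), t z := by
    rw [Finset.sum_map]
    simp only [mulLeftEmbedding_apply]
  rw [e3]
  apply sum_eq_sum_support
  · intro z hzT hzB
    by_contra hFz
    have hg2 : g (x⁻¹ * z) ≠ 0 := by
      intro h0; exact hFz (by simp [ht, h0])
    have huz : u z ≤ C := (Finset.mem_filter.1 hzT).2
    have : x⁻¹ * z ∈ Sg := hmemg.2 ⟨hg2, by rw [u_invmul hu]; linarith⟩
    exact hzB (Finset.mem_map.2 ⟨x⁻¹ * z, this, by simp [mulLeftEmbedding, mul_inv_cancel_left]⟩)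
  · intro z hzB hzT
    by_contra hFz
    have hg2 : g (x⁻¹ * z) ≠ 0 := by
      intro h0; exact hFz (by simp [ht, h0])
    have hh2 : h (z⁻¹ * k) ≠ 0 := by
      intro h0; exact hFz (by simp [ht, h0])
    have huz : u z ≤ C := by
      have := hh.2 _ hh2; rw [u_invmul hu] at this; linarith
    have hgpos : 0 ≤ u (x⁻¹ * z) := hg.2 _ hg2
    rw [u_invmul hu] at hgpos
    refine hzT (Finset.mem_filter.2 ⟨Finset.mem_image.2 ⟨(x, x⁻¹ * z),
      Finset.mem_product.2 ⟨hx, hmemg.2 ⟨hg2, by rw [u_invmul hu]; linarith⟩⟩,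
      by simp [mul_inv_cancel_left]⟩, huz⟩)

variable {a : G → ℤ} (ha : NovCond u a) (hsupp : ∀ g : G, a g ≠ 0 → 0 < u g)

include hu ha hsupp in
lemma conv_convPow (n : ℕ) : conv a (convPow a n) = convPow a (n + 1) := by
  induction n with
  | zero =>
    show conv a oneF = conv oneF a
    rw [conv_oneF_right, conv_oneF_left]
  | succ n ih =>
    show conv a (conv (convPow a n) a) = conv (convPow a (n + 1)) a
    rw [← conv_assoc hu (good_a (u := u) ha hsupp) (good_convPow hu ha hsupp n)
      (good_a (u := u) ha hsupp), ih]

end Aux4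
section Aux5
variable {G : Type*} [Group G] {u : G → ℝ}
variable (hu : ∀ a b : G, u (a * b) = u a + u b)
variable {a : G → ℤ} (ha : NovCond u a) (hsupp : ∀ g : G, a g ≠ 0 → 0 < u g)

include hu ha hsupp in
lemma conv_oneF_add_pow (n : ℕ) (k : G) :
    conv (oneF + a) (fun k' => (-1) ^ n * convPow a n k') k
      = (-1) ^ n * convPow a n k - (-1) ^ (n + 1) * convPow a (n + 1) k := by
  rw [conv_apply]
  set c : G → ℤ := fun x => (-1) ^ n * convPow a n (x⁻¹ * k) with hc
  have hsplit : ∀ x : G, ((oneF : G → ℤ) + a) x * c x = oneF x * c x + a x * c x := by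
    intro x; simp [Pi.add_apply, add_mul]
  rw [finsum_congr hsplit]
  have hcne : ∀ x, c x ≠ 0 → convPow a n (x⁻¹ * k) ≠ 0 := by
    intro x hx h0
    simp [hc, h0] at hx
  have h1 : (Function.support fun x => oneF x * c x).Finite := by
    apply Set.Finite.subset (Set.finite_singleton 1)
    intro x hx
    simp only [Function.mem_support] at hx
    have h3 := left_ne_zero_of_mul hx
    simp only [Set.mem_singleton_iff]
    by_contra hx1
    simp [oneF, hx1] at h3
  have hsub : (Function.support fun x => a x * c x) ⊆ {x | a x ≠ 0 ∧ u x ≤ u k} := by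
    intro x hx
    simp only [Function.mem_support] at hx
    have h2 := hcne x (right_ne_zero_of_mul hx)
    have h3 := (good_convPow hu ha hsupp n).2 _ h2
    rw [u_invmul hu] at h3
    exact ⟨left_ne_zero_of_mul hx, by linarith⟩
  have h2 : (Function.support fun x => a x * c x).Finite :=
    Set.Finite.subset (ha (u k)) hsub
  rw [finsum_add_distrib h1 h2]
  have e1 : ∑ᶠ x, oneF x * c x = (-1) ^ n * convPow a n k := by
    rw [finsum_eq_single _ (1 : G) (fun x hx => by simp [oneF, hx])]
    simp [oneF, hc]
  have hfin : (Function.support fun x => a x * convPow a n (x⁻¹ * k)).Finite := by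
    apply Set.Finite.subset (ha (u k))
    intro x hx
    simp only [Function.mem_support] at hx
    have h2 := right_ne_zero_of_mul hx
    have h3 := (good_convPow hu ha hsupp n).2 _ h2
    rw [u_invmul hu] at h3
    exact ⟨left_ne_zero_of_mul hx, by linarith⟩
  have e2 : ∑ᶠ x, a x * c x = (-1) ^ n * convPow a (n + 1) k := by
    have hcomm : ∀ x : G, a x * c x = (-1) ^ n * (a x * convPow a n (x⁻¹ * k)) := by
      intro x; simp only [hc]; ring
    rw [finsum_congr hcomm, ← mul_finsum _ _]
    congr 1
    rw [← conv_apply, conv_convPow hu ha hsupp]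
  rw [e1, e2, pow_succ]
  ring

include hu ha hsupp in
lemma conv_pow_oneF_add (n : ℕ) (k : G) :
    conv (fun k' => (-1) ^ n * convPow a n k') (oneF + a) k
      = (-1) ^ n * convPow a n k - (-1) ^ (n + 1) * convPow a (n + 1) k := by
  rw [conv_apply]
  set c : G → ℤ := fun x => (-1) ^ n * convPow a n x with hc
  have hcne : ∀ x, c x ≠ 0 → convPow a n x ≠ 0 := by
    intro x hx h0
    simp [hc, h0] at hx
  have hsplit : ∀ x : G, c x * ((oneF : G → ℤ) + a) (x⁻¹ * k)
      = c x * oneF (x⁻¹ * k) + c x * a (x⁻¹ * k) := by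
    intro x; simp [Pi.add_apply, mul_add]
  rw [finsum_congr hsplit]
  have h1 : (Function.support fun x => c x * oneF (x⁻¹ * k)).Finite := by
    apply Set.Finite.subset (Set.finite_singleton k)
    intro x hx
    simp only [Function.mem_support] at hx
    have h3 := right_ne_zero_of_mul hx
    simp only [Set.mem_singleton_iff]
    by_contra hx1
    have : x⁻¹ * k ≠ 1 := fun h => hx1 (by
      have := congrArg (x * ·) h
      simpa [mul_inv_cancel_left] using this.symm)
    simp [oneF, this] at h3
  have hfin : (Function.support fun x => convPow a n x * a (x⁻¹ * k)).Finite := by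
    apply Set.Finite.subset (key2 hu ha hsupp (u k))
    intro x hx
    simp only [Function.mem_support] at hx
    have h2 := right_ne_zero_of_mul hx
    have h3 := (hsupp _ h2).le
    rw [u_invmul hu] at h3
    exact ⟨⟨n, left_ne_zero_of_mul hx⟩, by linarith⟩
  have h2 : (Function.support fun x => c x * a (x⁻¹ * k)).Finite := by
    apply Set.Finite.subset hfin
    intro x hx
    simp only [Function.mem_support] at hx ⊢
    intro h0
    rcases mul_eq_zero.1 h0 with h | h
    · exact hcne x (left_ne_zero_of_mul hx) h
    · exact right_ne_zero_of_mul hx h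
  rw [finsum_add_distrib h1 h2]
  have e1 : ∑ᶠ x, c x * oneF (x⁻¹ * k) = (-1) ^ n * convPow a n k := by
    rw [finsum_eq_single _ k (fun x hx => by
      have h1 : x⁻¹ * k ≠ 1 := fun h => hx (by
        have := congrArg (x * ·) h
        simpa [mul_inv_cancel_left] using this.symm)
      simp [oneF, h1])]
    simp [oneF, hc]
  have e2 : ∑ᶠ x, c x * a (x⁻¹ * k) = (-1) ^ n * convPow a (n + 1) k := by
    have hcomm : ∀ x : G, c x * a (x⁻¹ * k)
        = (-1) ^ n * (convPow a n x * a (x⁻¹ * k)) := by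
      intro x; simp only [hc]; ring
    rw [finsum_congr hcomm, ← mul_finsum _ _]
    congr 1
    rw [← conv_apply]
    rfl
  rw [e1, e2, pow_succ]
  ring

end Aux5

theorem stmt4 (G : Type*) [Group G] (u : G → ℝ)
    (hu : ∀ a b : G, u (a * b) = u a + u b) (hu0 : u ≠ 0)
    (a : G → ℤ) (ha : NovCond u a) (hsupp : ∀ g : G, a g ≠ 0 → 0 < u g) :
    -- the series `Σ_{n ≥ 0} (-a)^n` makes sense: each group element receives only
    -- finitely many contributions
    (∀ k : G, {n : ℕ | convPow a n k ≠ 0}.Finite) ∧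
    NovCond u (fun k => ∑ᶠ n : ℕ, (-1) ^ n * convPow a n k) ∧
    -- `1 + a` is a unit with inverse `Σ_{n ≥ 0} (-a)^n`
    conv (oneF + a) (fun k => ∑ᶠ n : ℕ, (-1) ^ n * convPow a n k) = oneF ∧
    conv (fun k => ∑ᶠ n : ℕ, (-1) ^ n * convPow a n k) (oneF + a) = oneF := by
  classical
  set b : G → ℤ := fun k => ∑ᶠ n : ℕ, (-1) ^ n * convPow a n k with hb
  have hbne : ∀ k : G, b k ≠ 0 → ∃ n, convPow a n k ≠ 0 := by
    intro k hk
    by_contra hc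
    push_neg at hc
    exact hk (finsum_eq_zero_of_forall_eq_zero fun n => by simp [hc n])
  have hbnov : NovCond u b := by
    intro C
    apply Set.Finite.subset (key2 hu ha hsupp C)
    rintro k ⟨h1, h2⟩
    exact ⟨hbne k h1, h2⟩
  refine ⟨key1 hu ha hsupp, hbnov, ?_, ?_⟩
  · funext k
    set D : Finset G := insert (1 : G) (ha (u k)).toFinset with hD
    set N : ℕ := D.sup (fun x => (key1 hu ha hsupp (x⁻¹ * k)).toFinset.sup id) with hN
    have hNb : ∀ x ∈ D, ∀ n : ℕ, convPow a n (x⁻¹ * k) ≠ 0 → n ≤ N := by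
      intro x hx n hn
      calc n = id n := rfl
        _ ≤ (key1 hu ha hsupp (x⁻¹ * k)).toFinset.sup id :=
            Finset.le_sup ((Set.Finite.mem_toFinset _).2 hn)
        _ ≤ N := Finset.le_sup (f := fun x => (key1 hu ha hsupp (x⁻¹ * k)).toFinset.sup id) hx
    have hDmem : ∀ x : G, oneF x + a x ≠ 0 → (∃ n, convPow a n (x⁻¹ * k) ≠ 0) → x ∈ D := by
      intro x hx1 hx2
      obtain ⟨n, hn⟩ := hx2
      have h3 := (good_convPow hu ha hsupp n).2 _ hn
      rw [u_invmul hu] at h3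
      by_cases h : x = 1
      · simp [hD, h]
      · have h4 : a x ≠ 0 := by
          intro h0; simp [oneF, h, h0] at hx1
        exact Finset.mem_insert.2 (Or.inr ((Set.Finite.mem_toFinset _).2 ⟨h4, by linarith⟩))
    have SA : conv (oneF + a) b k = ∑ x ∈ D, ((oneF : G → ℤ) + a) x * b (x⁻¹ * k) := by
      apply conv_eq_sum
      intro x hx1 hx2
      exact hDmem x hx1 (hbne _ hx2)
    have SC : ∀ x ∈ D, b (x⁻¹ * k)
        = ∑ n ∈ Finset.range (N + 1), (-1) ^ n * convPow a n (x⁻¹ * k) := by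
      intro x hx
      apply finsum_eq_sum_of_support_subset
      intro n hn
      simp only [Function.mem_support] at hn
      have h5 : convPow a n (x⁻¹ * k) ≠ 0 := by
        intro h0; simp [h0] at hn
      simp only [Finset.coe_range, Set.mem_Iio]
      exact Nat.lt_succ_of_le (hNb x hx n h5)
    have SB : ∑ x ∈ D, ((oneF : G → ℤ) + a) x * b (x⁻¹ * k)
        = ∑ x ∈ D, ∑ n ∈ Finset.range (N + 1),
            ((oneF : G → ℤ) + a) x * ((-1) ^ n * convPow a n (x⁻¹ * k)) := by
      apply Finset.sum_congr rfl
      intro x hx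
      rw [SC x hx, Finset.mul_sum]
    have SE : ∀ n : ℕ, ∑ x ∈ D, ((oneF : G → ℤ) + a) x * ((-1) ^ n * convPow a n (x⁻¹ * k))
        = conv (oneF + a) (fun k' => (-1) ^ n * convPow a n k') k := by
      intro n
      symm
      apply conv_eq_sum
      intro x hx1 hx2
      refine hDmem x hx1 ⟨n, ?_⟩
      intro h0; simp [h0] at hx2
    have hend : convPow a (N + 1) k = 0 := by
      by_contra h
      have h1 : (1 : G) ∈ D := Finset.mem_insert_self _ _
      have := hNb 1 h1 (N + 1) (by simpa using h)
      omega
    rw [SA, SB, Finset.sum_comm]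
    rw [Finset.sum_congr rfl (fun n _ => SE n)]
    rw [Finset.sum_congr rfl (fun n _ => conv_oneF_add_pow hu ha hsupp n k)]
    rw [Finset.sum_range_sub' (fun n => (-1) ^ n * convPow a n k) (N + 1)]
    show (-1) ^ 0 * convPow a 0 k - (-1) ^ (N + 1) * convPow a (N + 1) k = oneF k
    rw [hend]
    simp [convPow]
  · funext k
    set D : Finset G := (key2 hu ha hsupp (u k)).toFinset with hD
    set N : ℕ := D.sup (fun x => (key1 hu ha hsupp x).toFinset.sup id) with hN
    have hNb : ∀ x ∈ D, ∀ n : ℕ, convPow a n x ≠ 0 → n ≤ N := by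
      intro x hx n hn
      calc n = id n := rfl
        _ ≤ (key1 hu ha hsupp x).toFinset.sup id :=
            Finset.le_sup ((Set.Finite.mem_toFinset _).2 hn)
        _ ≤ N := Finset.le_sup (f := fun x => (key1 hu ha hsupp x).toFinset.sup id) hx
    have hDmem : ∀ x : G, (∃ n, convPow a n x ≠ 0) → oneF (x⁻¹ * k) + a (x⁻¹ * k) ≠ 0 →
        x ∈ D := by
      intro x hx1 hx2
      have h3 : 0 ≤ u (x⁻¹ * k) := by
        by_cases h : x⁻¹ * k = 1
        · simp [h, u_one hu]
        · have h4 : a (x⁻¹ * k) ≠ 0 := by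
            intro h0; simp [oneF, h, h0] at hx2
          exact (hsupp _ h4).le
      rw [u_invmul hu] at h3
      exact (Set.Finite.mem_toFinset _).2 ⟨hx1, by linarith⟩
    have SA : conv b (oneF + a) k = ∑ x ∈ D, b x * ((oneF : G → ℤ) + a) (x⁻¹ * k) := by
      apply conv_eq_sum
      intro x hx1 hx2
      exact hDmem x (hbne _ hx1) hx2
    have SC : ∀ x ∈ D, b x = ∑ n ∈ Finset.range (N + 1), (-1) ^ n * convPow a n x := by
      intro x hx
      apply finsum_eq_sum_of_support_subset
      intro n hn
      simp only [Function.mem_support] at hn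
      have h5 : convPow a n x ≠ 0 := by
        intro h0; simp [h0] at hn
      simp only [Finset.coe_range, Set.mem_Iio]
      exact Nat.lt_succ_of_le (hNb x hx n h5)
    have SB : ∑ x ∈ D, b x * ((oneF : G → ℤ) + a) (x⁻¹ * k)
        = ∑ x ∈ D, ∑ n ∈ Finset.range (N + 1),
            ((-1) ^ n * convPow a n x) * ((oneF : G → ℤ) + a) (x⁻¹ * k) := by
      apply Finset.sum_congr rfl
      intro x hx
      rw [SC x hx, Finset.sum_mul]
    have SE : ∀ n : ℕ, ∑ x ∈ D, ((-1) ^ n * convPow a n x) * ((oneF : G → ℤ) + a) (x⁻¹ * k)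
        = conv (fun k' => (-1) ^ n * convPow a n k') (oneF + a) k := by
      intro n
      symm
      apply conv_eq_sum
      intro x hx1 hx2
      have h5 : convPow a n x ≠ 0 := by
        intro h0; simp [h0] at hx1
      exact hDmem x ⟨n, h5⟩ hx2
    have hend : convPow a (N + 1) k = 0 := by
      by_contra h
      have h1 : k ∈ D := (Set.Finite.mem_toFinset _).2 ⟨⟨N + 1, h⟩, le_refl _⟩
      have := hNb k h1 (N + 1) h
      omega
    rw [SA, SB, Finset.sum_comm]
    rw [Finset.sum_congr rfl (fun n _ => SE n)]
    rw [Finset.sum_congr rfl (fun n _ => conv_pow_oneF_add hu ha hsupp n k)]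
    rw [Finset.sum_range_sub' (fun n => (-1) ^ n * convPow a n k) (N + 1)]
    show (-1) ^ 0 * convPow a 0 k - (-1) ^ (N + 1) * convPow a (N + 1) k = oneF k
    rw [hend]
    simp [convPow]
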